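/- Let G be a finite group and X, Y finite G-sets. If for every subgroup H ≤ G the number of points of X fixed by H equals the number of points of Y fixed by H, then X and Y are isomorphic as G-sets (i.e., there is a G-equivariant bijection X → Y). -/

import Mathlib

open MulAction

universe u v

section helpers

variable {G : Type*} [Group G]

private lemma smul_mem_orbit' {X : Type*} [MulAction G X] {x a : X} (g : G)
    (ha : a ∈ orbit G x) : g • a ∈ orbit G x := by
  obtain ⟨c, hc⟩ := mem_orbit_iff.mp ha
  exact mem_orbit_iff.mpr ⟨g * c, by rw [mul_smul, hc]⟩

/-- `MulAction` on the complement of an orbit. -/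
def complAction {X : Type*} [MulAction G X] (x : X) :
    MulAction G {a : X // a ∉ orbit G x} where
  smul g a := ⟨g • a.1, fun hmem => a.2 (by
    have := smul_mem_orbit' (g⁻¹) hmem
    rwa [inv_smul_smul] at this)⟩
  one_smul a := Subtype.ext (one_smul G a.1)
  mul_smul g h a := Subtype.ext (mul_smul g h a.1)

variable {X : Type*} {Y : Type*} [MulAction G X] [MulAction G Y]

noncomputable def omap (x : X) (y : Y) : orbit G x → orbit G y :=
  fun a => ⟨Classical.choose (mem_orbit_iff.mp a.2) • y, mem_orbit y _⟩

lemma omap_spec {x : X} {y : Y} (hst : stabilizer G x = stabilizer G y)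
    (g : G) (a : orbit G x) (hg : (a : X) = g • x) : (omap x y a : Y) = g • y := by
  set c := Classical.choose (mem_orbit_iff.mp a.2) with hc
  have hcs : c • x = (a : X) := Classical.choose_spec (mem_orbit_iff.mp a.2)
  have hmem : g⁻¹ * c ∈ stabilizer G x := by
    rw [mem_stabilizer_iff, mul_smul, hcs, hg, inv_smul_smul]
  rw [hst, mem_stabilizer_iff, mul_smul] at hmem
  have : c • y = g • y := by
    calc c • y = g • (g⁻¹ • (c • y)) := (smul_inv_smul g _).symm
    _ = g • y := by rw [hmem]
  simpa [omap, ← hc] using this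

lemma omap_equivariant {x : X} {y : Y} (hst : stabilizer G x = stabilizer G y)
    (g : G) (a b : orbit G x) (hb : (b : X) = g • (a : X)) :
    (omap x y b : Y) = g • (omap x y a : Y) := by
  obtain ⟨k, hk⟩ := mem_orbit_iff.mp a.2
  rw [omap_spec hst k a hk.symm]
  rw [omap_spec hst (g * k) b (by rw [hb, ← hk, mul_smul]), mul_smul]

lemma omap_omap {x : X} {y : Y} (hst : stabilizer G x = stabilizer G y)
    (a : orbit G x) : omap y x (omap x y a) = a := by
  obtain ⟨k, hk⟩ := mem_orbit_iff.mp a.2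
  have h1 : (omap x y a : Y) = k • y := omap_spec hst k a hk.symm
  have h2 : (omap y x (omap x y a) : X) = k • x := omap_spec hst.symm k _ h1
  exact Subtype.ext (by rw [h2, hk])

/-- The equivariant equivalence between two orbits with equal stabilizers. -/
noncomputable def orbitEquiv {x : X} {y : Y} (hst : stabilizer G x = stabilizer G y) :
    orbit G x ≃ orbit G y where
  toFun := omap x y
  invFun := omap y x
  left_inv a := omap_omap hst a
  right_inv b := omap_omap hst.symm b

lemma omap_fix_iff {x : X} {y : Y} (hst : stabilizer G x = stabilizer G y)
    (K : Subgroup G) (b : orbit G x) :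
    (∀ g ∈ K, g • (b : X) = (b : X)) ↔ (∀ g ∈ K, g • (omap x y b : Y) = (omap x y b : Y)) := by
  constructor
  · intro hfix g hg
    have hmem : g • (b : X) ∈ orbit G x := smul_mem_orbit' g b.2
    have heq : (⟨g • (b : X), hmem⟩ : orbit G x) = b := Subtype.ext (hfix g hg)
    have := omap_equivariant hst g b ⟨g • (b : X), hmem⟩ rfl
    rw [heq] at this
    exact this.symm
  · intro hfix g hg
    have hmem : g • (omap x y b : Y) ∈ orbit G y := smul_mem_orbit' g (omap x y b).2
    have heq : (⟨g • (omap x y b : Y), hmem⟩ : orbit G y) = omap x y b :=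
      Subtype.ext (hfix g hg)
    have := omap_equivariant hst.symm g (omap x y b) ⟨g • (omap x y b : Y), hmem⟩ rfl
    rw [heq, omap_omap hst] at this
    exact this.symm

end helpers

noncomputable def splitEquiv {α : Type*} (P Q : α → Prop) :
    {a : α // P a} ≃ ({b : {a : α // Q a} // P b.1} ⊕ {b : {a : α // ¬ Q a} // P b.1}) := by
  classical
  exact
  { toFun := fun a => if h : Q a.1 then .inl ⟨⟨a.1, h⟩, a.2⟩ else .inr ⟨⟨a.1, h⟩, a.2⟩
    invFun := fun b => match b with
      | .inl c => ⟨c.1.1, c.2⟩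
      | .inr c => ⟨c.1.1, c.2⟩
    left_inv := fun a => by by_cases h : Q a.1 <;> simp [h]
    right_inv := fun b => by
      rcases b with c | c
      · simp [c.1.2]
      · simp [c.1.2] }

lemma split_card {α : Type*} [Finite α] (P Q : α → Prop) :
    Nat.card {a : α // P a} =
      Nat.card {b : {a : α // Q a} // P b.1} + Nat.card {b : {a : α // ¬ Q a} // P b.1} := by
  rw [Nat.card_congr (splitEquiv P Q), Nat.card_sum]

theorem burnside_aux {G : Type*} [Group G] [Finite G] :
    ∀ (n : ℕ) (X : Type u) (Y : Type v) [Finite X] [Finite Y] [MulAction G X] [MulAction G Y],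
      Nat.card X ≤ n →
      (∀ H : Subgroup G,
        Nat.card {x : X | ∀ g ∈ H, g • x = x} = Nat.card {y : Y | ∀ g ∈ H, g • y = y}) →
      ∃ e : X ≃ Y, ∀ (g : G) (x : X), e (g • x) = g • e x := by
  intro n
  induction n with
  | zero =>
    intro X Y _ _ _ _ hcard h
    have hX0 : Nat.card X = 0 := Nat.le_zero.mp hcard
    have hXe : IsEmpty X := by
      rcases Nat.card_eq_zero.mp hX0 with h' | h'
      · exact h'
      · exact (@not_finite X h' inferInstance).elim
    have hfixX : Nat.card {x : X | ∀ g ∈ (⊥ : Subgroup G), g • x = x} = 0 := by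
      have : IsEmpty {x : X | ∀ g ∈ (⊥ : Subgroup G), g • x = x} :=
        ⟨fun a => hXe.false a.1⟩
      exact Nat.card_of_isEmpty
    have hfixY := (h ⊥).symm.trans hfixX
    have hYe : IsEmpty Y := by
      by_contra hne
      rw [not_isEmpty_iff] at hne
      obtain ⟨y⟩ := hne
      have : Nonempty {y : Y | ∀ g ∈ (⊥ : Subgroup G), g • y = y} :=
        ⟨⟨y, fun g hg => by rw [Subgroup.mem_bot] at hg; rw [hg, one_smul]⟩⟩
      exact Nat.card_ne_zero.mpr ⟨this, inferInstance⟩ hfixY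
    exact ⟨Equiv.equivOfIsEmpty X Y, fun g x => (hXe.false x).elim⟩
  | succ n IH =>
    intro X Y _ _ _ _ hcard h
    by_cases hle : Nat.card X ≤ n
    · exact IH X Y hle h
    have hX1 : Nat.card X = n + 1 := by omega
    have hXne : Nonempty X := (Nat.card_pos_iff.mp (by omega)).1
    classical
    -- the set of subgroups with nonempty fixed-point set
    set S : Set (Subgroup G) := {H | Nat.card {x : X | ∀ g ∈ H, g • x = x} ≠ 0} with hSdef
    have hbot : (⊥ : Subgroup G) ∈ S := by
      obtain ⟨x⟩ := hXne
      exact Nat.card_ne_zero.mpr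
        ⟨⟨⟨x, fun g hg => by rw [Subgroup.mem_bot] at hg; rw [hg, one_smul]⟩⟩, inferInstance⟩
    obtain ⟨H, hHS, hmax⟩ :=
      Set.Finite.exists_maximalFor (fun K : Subgroup G => Nat.card K) S (Set.toFinite S) ⟨⊥, hbot⟩
    have key : ∀ K : Subgroup G, H ≤ K → K ∈ S → H = K := fun K hleK hKS =>
      Subgroup.eq_of_le_of_card_ge hleK (hmax hKS (Subgroup.card_le_of_le hleK))
    obtain ⟨x0, hx0⟩ := (Nat.card_ne_zero.mp hHS).1
    have hy0' : Nat.card {y : Y | ∀ g ∈ H, g • y = y} ≠ 0 := (h H) ▸ hHS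
    obtain ⟨y0, hy0⟩ := (Nat.card_ne_zero.mp hy0').1
    have hstabx : stabilizer G x0 = H := by
      refine (key _ (fun g hg => mem_stabilizer_iff.mpr (hx0 g hg)) ?_).symm
      exact Nat.card_ne_zero.mpr ⟨⟨⟨x0, fun g hg => mem_stabilizer_iff.mp hg⟩⟩, inferInstance⟩
    have hstaby : stabilizer G y0 = H := by
      refine (key _ (fun g hg => mem_stabilizer_iff.mpr (hy0 g hg)) ?_).symm
      rw [hSdef, Set.mem_setOf_eq, h (stabilizer G y0)]
      exact Nat.card_ne_zero.mpr ⟨⟨⟨y0, fun g hg => mem_stabilizer_iff.mp hg⟩⟩, inferInstance⟩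
    have hst : stabilizer G x0 = stabilizer G y0 := hstabx.trans hstaby.symm
    letI : MulAction G {a : X // a ∉ orbit G x0} := complAction x0
    letI : MulAction G {b : Y // b ∉ orbit G y0} := complAction y0
    -- marks of complements agree
    have orbFix : ∀ K : Subgroup G,
        Nat.card {b : {a : X // a ∈ orbit G x0} // ∀ g ∈ K, g • b.1 = b.1} =
        Nat.card {b : {a : Y // a ∈ orbit G y0} // ∀ g ∈ K, g • b.1 = b.1} := by
      intro K
      exact Nat.card_congr (Equiv.subtypeEquiv (orbitEquiv hst) (fun b => omap_fix_iff hst K b))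
    have hcomplMarks : ∀ K : Subgroup G,
        Nat.card {x' : {a : X // a ∉ orbit G x0} | ∀ g ∈ K, g • x' = x'} =
        Nat.card {y' : {b : Y // b ∉ orbit G y0} | ∀ g ∈ K, g • y' = y'} := by
      intro K
      have e1 : Nat.card {x' : {a : X // a ∉ orbit G x0} | ∀ g ∈ K, g • x' = x'} =
          Nat.card {b : {a : X // ¬ a ∈ orbit G x0} // ∀ g ∈ K, g • b.1 = b.1} :=
        Nat.card_congr (Equiv.subtypeEquivRight (fun b =>
          ⟨fun hh g hg => congrArg Subtype.val (hh g hg),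
           fun hh g hg => Subtype.ext (hh g hg)⟩))
      have e2 : Nat.card {y' : {b : Y // b ∉ orbit G y0} | ∀ g ∈ K, g • y' = y'} =
          Nat.card {b : {a : Y // ¬ a ∈ orbit G y0} // ∀ g ∈ K, g • b.1 = b.1} :=
        Nat.card_congr (Equiv.subtypeEquivRight (fun b =>
          ⟨fun hh g hg => congrArg Subtype.val (hh g hg),
           fun hh g hg => Subtype.ext (hh g hg)⟩))
      have hsx := split_card (fun a : X => ∀ g ∈ K, g • a = a) (fun a => a ∈ orbit G x0)
      have hsy := split_card (fun a : Y => ∀ g ∈ K, g • a = a) (fun a => a ∈ orbit G y0)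
      have hK : Nat.card {a : X // ∀ g ∈ K, g • a = a} =
          Nat.card {a : Y // ∀ g ∈ K, g • a = a} := h K
      have ho := orbFix K
      rw [e1, e2]
      omega
    -- cardinality bound for the complement
    have hcardc : Nat.card {a : X // a ∉ orbit G x0} ≤ n := by
      have hsum : Nat.card X =
          Nat.card {a : X // a ∈ orbit G x0} + Nat.card {a : X // ¬ a ∈ orbit G x0} := by
        rw [← Nat.card_sum]
        exact Nat.card_congr (Equiv.sumCompl (fun a : X => a ∈ orbit G x0)).symm
      have hpos : 0 < Nat.card {a : X // a ∈ orbit G x0} :=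
        Nat.card_pos_iff.mpr ⟨⟨⟨x0, mem_orbit_self x0⟩⟩, inferInstance⟩
      omega
    obtain ⟨ec, hec⟩ := IH {a : X // a ∉ orbit G x0} {b : Y // b ∉ orbit G y0} hcardc hcomplMarks
    -- assemble the equivalence
    let eo : orbit G x0 ≃ orbit G y0 := orbitEquiv hst
    refine ⟨{
      toFun := fun a => if ha : a ∈ orbit G x0 then (eo ⟨a, ha⟩ : Y) else (ec ⟨a, ha⟩ : Y)
      invFun := fun b => if hb : b ∈ orbit G y0 then (eo.symm ⟨b, hb⟩ : X) else (ec.symm ⟨b, hb⟩ : X)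
      left_inv := ?_
      right_inv := ?_ }, ?_⟩
    · intro a
      by_cases ha : a ∈ orbit G x0
      · have hmem : (eo ⟨a, ha⟩ : Y) ∈ orbit G y0 := (eo ⟨a, ha⟩).2
        simp only [dif_pos ha, dif_pos hmem]
        have : (⟨(eo ⟨a, ha⟩ : Y), hmem⟩ : orbit G y0) = eo ⟨a, ha⟩ := Subtype.ext rfl
        rw [this, Equiv.symm_apply_apply]
      · have hmem : (ec ⟨a, ha⟩).1 ∉ orbit G y0 := (ec ⟨a, ha⟩).2
        simp only [dif_neg ha, dif_neg hmem]
        have : (⟨(ec ⟨a, ha⟩).1, hmem⟩ : {b : Y // b ∉ orbit G y0}) = ec ⟨a, ha⟩ :=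
          Subtype.ext rfl
        rw [this, Equiv.symm_apply_apply]
    · intro b
      by_cases hb : b ∈ orbit G y0
      · have hmem : (eo.symm ⟨b, hb⟩ : X) ∈ orbit G x0 := (eo.symm ⟨b, hb⟩).2
        simp only [dif_pos hb, dif_pos hmem]
        have : (⟨(eo.symm ⟨b, hb⟩ : X), hmem⟩ : orbit G x0) = eo.symm ⟨b, hb⟩ := Subtype.ext rfl
        rw [this, Equiv.apply_symm_apply]
      · have hmem : (ec.symm ⟨b, hb⟩).1 ∉ orbit G x0 := (ec.symm ⟨b, hb⟩).2
        simp only [dif_neg hb, dif_neg hmem]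
        have : (⟨(ec.symm ⟨b, hb⟩).1, hmem⟩ : {a : X // a ∉ orbit G x0}) = ec.symm ⟨b, hb⟩ :=
          Subtype.ext rfl
        rw [this, Equiv.apply_symm_apply]
    · intro g a
      simp only [Equiv.coe_fn_mk]
      by_cases ha : a ∈ orbit G x0
      · have ha2 : g • a ∈ orbit G x0 := smul_mem_orbit' g ha
        rw [dif_pos ha2, dif_pos ha]
        exact omap_equivariant hst g ⟨a, ha⟩ ⟨g • a, ha2⟩ rfl
      · have ha2 : g • a ∉ orbit G x0 := fun hmem => ha (by
          have := smul_mem_orbit' g⁻¹ hmem; rwa [inv_smul_smul] at this)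
        rw [dif_neg ha2, dif_neg ha]
        have heq : (⟨g • a, ha2⟩ : {a : X // a ∉ orbit G x0}) =
            g • (⟨a, ha⟩ : {a : X // a ∉ orbit G x0}) := Subtype.ext rfl
        rw [heq, hec]
        rfl
      
theorem burnside_marks_determine_G_set {G X Y : Type*} [Group G] [Finite G]
    [Finite X] [Finite Y] [MulAction G X] [MulAction G Y]
    (h : ∀ H : Subgroup G,
      Nat.card {x : X | ∀ g ∈ H, g • x = x} = Nat.card {y : Y | ∀ g ∈ H, g • y = y}) :
    ∃ e : X ≃ Y, ∀ (g : G) (x : X), e (g • x) = g • e x := by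
  exact burnside_aux (Nat.card X) X Y le_rfl h
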